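/- Let A be an abelian group, α, β ∈ A, and M, N matchings on [2n]. Then: (1) the multisets of values of s_{α,β} on T(M,l) and on T(N,l) are equal for all l ≥ 0 if and only if s_{α,β}(M) = s_{α,β}(N) and the sequences seq_{α,β}(M) and seq_{α,β}(N) are equal as multisets of terms; (2) the multiset of values of s_{α,β} on T(M,l) equals the multiset of values of s_{β,α} on T(N,l) for all l ≥ 0 if and only if s_{α,β}(M) = s_{β,α}(N) and seq_{α,β}(M) and seq_{β,α}(N) are equal as multisets of terms. -/

import Mathlib

/-- Number of crossings of a matching given by its set of edges `(a, b)` with `a < b`: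
unordered pairs of edges `e, f` with `min e < min f < max e < max f`. -/
def crStat (s : Finset (ℕ × ℕ)) : ℕ :=
  ((s ×ˢ s).filter fun p => p.1.1 < p.2.1 ∧ p.2.1 < p.1.2 ∧ p.1.2 < p.2.2).card

/-- Number of nestings: unordered pairs of edges `e, f` with `min e < min f < max f < max e`. -/
def neStat (s : Finset (ℕ × ℕ)) : ℕ :=
  ((s ×ˢ s).filter fun p => p.1.1 < p.2.1 ∧ p.2.2 < p.1.2).card

/-- Number of camels (separated pairs): unordered pairs of edges `e, f` with `max e < min f`. -/
def caStat (s : Finset (ℕ × ℕ)) : ℕ :=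
  ((s ×ˢ s).filter fun p => p.1.2 < p.2.1).card

/-- `s` is the edge set of a matching on `[2n] = {1, …, 2n}`: `n` edges `(a, b)` with
`a < b`, and every vertex of `[2n]` belongs to exactly one edge. -/
def IsMatching (n : ℕ) (s : Finset (ℕ × ℕ)) : Prop :=
  s.card = n ∧
  (∀ e ∈ s, e.1 < e.2 ∧ 1 ≤ e.1 ∧ e.2 ≤ 2 * n) ∧
  (∀ v : ℕ, 1 ≤ v → v ≤ 2 * n → ∃! e, e ∈ s ∧ (v = e.1 ∨ v = e.2))

/-- The order isomorphism `[2n] → {2, …, 2n+2} \ {x}`. -/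
def shiftV (x v : ℕ) : ℕ := if v + 1 < x then v + 1 else v + 2

/-- The matching on `[2n+2]` obtained from a matching on `[2n]` by relabeling its vertices
order-isomorphically as `{2, …, 2n+2} \ {x}` and adding the new first edge `{1, x}`. -/
def addFirst (x : ℕ) (s : Finset (ℕ × ℕ)) : Finset (ℕ × ℕ) :=
  insert (1, x) (s.image fun e => (shiftV x e.1, shiftV x e.2))

/-- All matchings obtained from `s` by adding a new first edge in all possible ways. -/
def childrenM (s : Finset (ℕ × ℕ)) : Multiset (Finset (ℕ × ℕ)) :=
  (Finset.Icc 2 (2 * s.card + 2)).val.map fun x => addFirst x s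

/-- `levelM s l` is the multiset `T(s, l)` of matchings obtained from `s` by `l` successive
additions of a new first edge in all possible ways. -/
def levelM (s : Finset (ℕ × ℕ)) : ℕ → Multiset (Finset (ℕ × ℕ))
  | 0 => {s}
  | l + 1 => (levelM s l).bind childrenM

/-- The map `R_{α,β,i}` (for `1 ≤ i ≤ l`) sending `(x_1, …, x_l)` to the sequence of length
`l+2` consisting of `x_i`, then `x_1, …, x_i` each increased by `x_i - x_1 + α`, then
`x_i, …, x_l` each increased by `x_i - x_1 + β`. -/
def Rmap {A : Type*} [AddCommGroup A] (α β : A) (i : ℕ) (u : List A) : List A :=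
  u.getD (i - 1) 0 ::
    ((u.take i).map (fun y => y + (u.getD (i - 1) 0 - u.getD 0 0 + α)) ++
     (u.drop (i - 1)).map (fun y => y + (u.getD (i - 1) 0 - u.getD 0 0 + β)))

/-- `IsSeq α β s u` holds iff `u = seq_{α,β}(s)`: defined by `seq_{α,β}(∅) = (0)` and
`seq_{α,β}(N) = R_{α,β,x-1}(seq_{α,β}(M))` whenever `N` arises from `M` by adding the
first edge `{1, x}`. -/
inductive IsSeq {A : Type*} [AddCommGroup A] (α β : A) : Finset (ℕ × ℕ) → List A → Prop
  | empty : IsSeq α β ∅ [(0 : A)]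
  | step (s : Finset (ℕ × ℕ)) (u : List A) (x : ℕ) (hu : IsSeq α β s u)
      (h2 : 2 ≤ x) (hx : x ≤ 2 * s.card + 2) :
      IsSeq α β (addFirst x s) (Rmap α β (x - 1) u)

namespace KlazarAux

open Finset

variable {A : Type*} [AddCommGroup A]

/-- shift a multiset by a constant -/
def sh (c : A) (s : Multiset A) : Multiset A := s.map (· + c)

/-- convolution of multisets -/
def cv (s t : Multiset A) : Multiset A := s.bind fun a => t.map (· + a)

@[simp] lemma sh_zero_right (s : Multiset A) : sh (0 : A) s = s := by
  simp [sh]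

@[simp] lemma sh_zero (c : A) : sh c (0 : Multiset A) = 0 := by simp [sh]

lemma sh_add (c : A) (s t : Multiset A) : sh c (s + t) = sh c s + sh c t := by
  simp [sh]

lemma sh_sh (c d : A) (s : Multiset A) : sh c (sh d s) = sh (d + c) s := by
  simp only [sh, Multiset.map_map]
  congr 1
  funext b
  simp [add_assoc]

@[simp] lemma sh_singleton (c a : A) : sh c ({a} : Multiset A) = {a + c} := by
  simp [sh]

lemma sh_sum {ι : Type*} (c : A) (S : Finset ι) (f : ι → Multiset A) :
    sh c (∑ i ∈ S, f i) = ∑ i ∈ S, sh c (f i) := by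
  classical
  induction S using Finset.induction with
  | empty => simp
  | insert _ _ h ih => simp [Finset.sum_insert h, sh_add, ih]

@[simp] lemma cv_zero (t : Multiset A) : cv (0 : Multiset A) t = 0 := by simp [cv]

@[simp] lemma cv_zero_right (s : Multiset A) : cv s (0 : Multiset A) = 0 := by simp [cv]

lemma cv_add (s s' t : Multiset A) : cv (s + s') t = cv s t + cv s' t := by
  simp [cv]

lemma cv_add_right (s t t' : Multiset A) : cv s (t + t') = cv s t + cv s t' := by
  induction s using Multiset.induction with
  | empty => simp
  | cons a s ih =>
      simp only [cv, Multiset.cons_bind, Multiset.map_add] at *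
      rw [ih]
      abel

lemma cv_singleton (a : A) (t : Multiset A) : cv ({a} : Multiset A) t = sh a t := by
  simp [cv, sh, Multiset.singleton_bind]

lemma cv_sh (c : A) (s t : Multiset A) : cv (sh c s) t = sh c (cv s t) := by
  simp only [cv, sh, Multiset.bind_map, Multiset.map_bind, Multiset.map_map]
  apply Multiset.bind_congr
  intro a _
  congr 1
  funext b
  simp [add_comm, add_assoc, add_left_comm]

lemma cv_sh_right (c : A) (s t : Multiset A) : cv s (sh c t) = sh c (cv s t) := by
  simp only [cv, sh, Multiset.map_bind, Multiset.map_map]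
  apply Multiset.bind_congr
  intro a _
  congr 1
  funext b
  simp [add_comm, add_assoc, add_left_comm]

lemma cv_sum {ι : Type*} (S : Finset ι) (f : ι → Multiset A) (t : Multiset A) :
    cv (∑ i ∈ S, f i) t = ∑ i ∈ S, cv (f i) t := by
  classical
  induction S using Finset.induction with
  | empty => simp
  | insert _ _ h ih => simp [Finset.sum_insert h, cv_add, ih]

lemma cv_sum_right {ι : Type*} (S : Finset ι) (s : Multiset A) (f : ι → Multiset A) :
    cv s (∑ i ∈ S, f i) = ∑ i ∈ S, cv s (f i) := by
  classical
  induction S using Finset.induction with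
  | empty => simp
  | insert _ _ h ih => simp [Finset.sum_insert h, cv_add_right, ih]

section SumHelpers
variable {M : Type*} [AddCommMonoid M]

/-- triangular double-sum reindex -/
lemma SIG (n : ℕ) (F : ℕ → ℕ → M) :
    ∑ t ∈ range (n+1), ∑ k ∈ range (t+1), F k (t - k)
      = ∑ k ∈ range (n+1), ∑ m ∈ range (n+1-k), F k m := by
  induction n with
  | zero => simp
  | succ n ih =>
      rw [Finset.sum_range_succ, ih]
      rw [Finset.sum_range_succ (fun k => ∑ m ∈ range (n+2-k), F k m)]
      have h2 : (n + 2) - (n + 1) = 1 := by omega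
      rw [h2]
      have h3 : ∀ k ∈ range (n+1),
          ∑ m ∈ range (n+2-k), F k m = ∑ m ∈ range (n+1-k), F k m + F k (n+1-k) := by
        intro k hk
        rw [mem_range] at hk
        have : n + 2 - k = (n + 1 - k) + 1 := by omega
        rw [this, Finset.sum_range_succ]
      rw [Finset.sum_congr rfl h3, Finset.sum_add_distrib]
      rw [Finset.sum_range_succ (fun k => F k (n+1-k))]
      simp [add_assoc]

/-- swap order of triangular double sum -/
lemma SIG2 (n : ℕ) (F : ℕ → ℕ → M) :
    ∑ k ∈ range (n+1), ∑ m ∈ range (n+1-k), F k m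
      = ∑ m ∈ range (n+1), ∑ k ∈ range (n+1-m), F k m := by
  rw [← SIG n F, ← SIG n (fun m k => F k m)]
  apply Finset.sum_congr rfl
  intro t ht
  rw [mem_range] at ht
  rw [← Finset.sum_range_reflect]
  apply Finset.sum_congr rfl
  intro k hk
  rw [mem_range] at hk
  congr 1 <;> omega

/-- padding a sum with an `if` -/
lemma PAD1 {n N : ℕ} (h : n ≤ N) (f : ℕ → M) :
    ∑ i ∈ range (n+1), f i = ∑ i ∈ range (N+1), if i ≤ n then f i else 0 := by
  rw [← Finset.sum_filter]
  apply Finset.sum_congr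
  · ext i; simp [Nat.lt_succ_iff]; omega
  · intros; rfl

/-- turning an `if t ≤ r` sum into a shifted sum, given vanishing above l -/
lemma sum_ite_ge {l : ℕ} (g : ℕ → M) (hg : ∀ r, l < r → g r = 0) (t : ℕ) :
    ∑ r ∈ range (l+1), (if t ≤ r then g r else 0) = ∑ j ∈ range (l+1), g (t + j) := by
  rw [← Finset.sum_filter]
  have hfil : Finset.filter (fun r => t ≤ r) (range (l+1)) = Finset.Ico t (l+1) := by
    ext r; simp [Nat.lt_succ_iff, mem_Ico]; omega
  rw [hfil]
  have hr : ∑ j ∈ range (l+1), g (t + j) = ∑ r ∈ Finset.Ico t (t+(l+1)), g r := by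
    rw [Finset.sum_Ico_eq_sum_range]
    simp
  rw [hr]
  rcases le_or_gt t (l+1) with hc | hc
  · rw [← Finset.sum_Ico_consecutive g hc (by omega : l+1 ≤ t+(l+1))]
    have : ∑ r ∈ Finset.Ico (l+1) (t+(l+1)), g r = 0 := by
      apply Finset.sum_eq_zero
      intro r hr'
      rw [mem_Ico] at hr'
      exact hg r (by omega)
    rw [this, add_zero]
  · have h1 : Finset.Ico t (l+1) = ∅ := by
      apply Finset.Ico_eq_empty; omega
    rw [h1, Finset.sum_empty]
    symm
    apply Finset.sum_eq_zero
    intro r hr'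
    rw [mem_Ico] at hr'
    exact hg r (by omega)

/-- if pulled through a sum -/
lemma ITE_SUM {ι : Type*} (c : Prop) [Decidable c] (S : Finset ι) (f : ι → M) :
    (if c then (∑ i ∈ S, f i) else 0) = ∑ i ∈ S, (if c then f i else 0) := by
  by_cases h : c <;> simp [h]

end SumHelpers

section HLsec
variable {A : Type*} [AddCommGroup A]

/-- complete-homogeneous multiset: sums over size-r sub-multisets (with repetition) -/
def HL : ℕ → List A → Multiset A
  | 0, _ => {0}
  | _+1, [] => 0
  | r+1, (x :: xs) => sh x (HL r (x :: xs)) + HL (r+1) xs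

@[simp] lemma HL_zero (xs : List A) : HL 0 xs = {0} := by rw [HL]

@[simp] lemma HL_succ_nil (r : ℕ) : HL (r+1) ([] : List A) = 0 := by rw [HL]

lemma HL_succ_cons (r : ℕ) (x : A) (xs : List A) :
    HL (r+1) (x :: xs) = sh x (HL r (x :: xs)) + HL (r+1) xs := by rw [HL]

@[simp] lemma HL_nil_vanish {r : ℕ} (h : 0 < r) : HL r ([] : List A) = 0 := by
  cases r with
  | zero => omega
  | succ r => rw [HL]

/-- H1': peel the head -/
lemma HL_cons (r : ℕ) (x : A) (xs : List A) :
    HL r (x :: xs) = ∑ j ∈ Finset.range (r+1), sh (j • x) (HL (r-j) xs) := by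
  induction r with
  | zero => simp
  | succ r ih =>
      rw [HL_succ_cons]
      rw [ih, sh_sum, Finset.sum_range_succ' (fun j => sh (j • x) (HL (r+1-j) xs)) (r+1)]
      simp only [zero_smul, sh_zero_right]
      have : ∀ j ∈ Finset.range (r+1),
          sh x (sh (j • x) (HL (r-j) xs)) = sh ((j+1) • x) (HL (r+1-(j+1)) xs) := by
        intro j hj
        rw [sh_sh]
        congr 2
        · rw [succ_nsmul]
        · omega
      rw [Finset.sum_congr rfl this]
      simp

lemma HL_singleton (r : ℕ) (x : A) : HL r [x] = {r • x} := by
  induction r with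
  | zero => simp
  | succ r ih =>
      rw [HL_succ_cons]
      rw [ih, HL_succ_nil, add_zero, sh_singleton, succ_nsmul]

/-- H1: split an append -/
lemma HL_append (t : ℕ) (xs ys : List A) :
    HL t (xs ++ ys) = ∑ k ∈ Finset.range (t+1), cv (HL k xs) (HL (t-k) ys) := by
  induction xs generalizing t with
  | nil =>
      rw [Finset.sum_range_succ' (fun k => cv (HL k ([]:List A)) (HL (t-k) ys)) t]
      simp only [List.nil_append, HL_succ_nil, cv_zero, Finset.sum_const_zero, zero_add,
        HL_zero, Nat.sub_zero]
      rw [cv_singleton, sh_zero_right]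
  | cons x xs ih =>
      rw [show (x :: xs) ++ ys = x :: (xs ++ ys) from rfl, HL_cons]
      have hL : ∀ j ∈ Finset.range (t+1),
          sh (j • x) (HL (t-j) (xs ++ ys))
            = ∑ k ∈ Finset.range (t-j+1), sh (j • x) (cv (HL k xs) (HL (t-j-k) ys)) := by
        intro j hj
        rw [ih, sh_sum]
      rw [Finset.sum_congr rfl hL]
      -- now reindex: LHS pairs (j,k), j+k ≤ t; RHS: ∑_{k'} cv (HL k' (x::xs)) (HL (t-k') ys)
      have hR : ∀ k' ∈ Finset.range (t+1),
          cv (HL k' (x :: xs)) (HL (t-k') ys)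
            = ∑ j ∈ Finset.range (k'+1), sh (j • x) (cv (HL (k'-j) xs) (HL (t-k') ys)) := by
        intro k' hk'
        rw [HL_cons, cv_sum]
        apply Finset.sum_congr rfl
        intro j hj
        rw [cv_sh]
      rw [Finset.sum_congr rfl hR]
      -- RHS = ∑_{k'∈range(t+1)} ∑_{j∈range(k'+1)} F j (k'-j) where
      --   F j k := sh (j•x) (cv (HL k xs) (HL (t-j-k) ys))
      have key := SIG t (fun j k => sh (j • x) (cv (HL k xs) (HL (t - j - k) ys)))
      -- key : ∑_{k'∈range(t+1)} ∑_{j∈range(k'+1)} F j (k'-j) = ∑_j ∑_{k∈range(t+1-j)} F j k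
      rw [show (∑ k' ∈ Finset.range (t+1), ∑ j ∈ Finset.range (k'+1),
            sh (j • x) (cv (HL (k'-j) xs) (HL (t-k') ys)))
          = ∑ k' ∈ Finset.range (t+1), ∑ j ∈ Finset.range (k'+1),
            (fun j k => sh (j • x) (cv (HL k xs) (HL (t - j - k) ys))) j (k' - j) from ?_]
      · rw [key]
        apply Finset.sum_congr rfl
        intro j hj
        rw [Finset.mem_range] at hj
        have : t - j + 1 = t + 1 - j := by omega
        rw [this]
      · apply Finset.sum_congr rfl
        intro k' hk'
        apply Finset.sum_congr rfl
        intro j hj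
        rw [Finset.mem_range] at hk' hj
        have hq : t - k' = t - j - (k' - j) := by omega
        rw [hq]

/-- H2: HL of a shifted list -/
lemma HL_map_add (k : ℕ) (c : A) (xs : List A) :
    HL k (xs.map (· + c)) = sh (k • c) (HL k xs) := by
  induction xs generalizing k with
  | nil =>
      cases k with
      | zero => simp
      | succ k => simp
  | cons x xs ih =>
      rw [List.map_cons, HL_cons, HL_cons, sh_sum]
      apply Finset.sum_congr rfl
      intro j hj
      rw [Finset.mem_range] at hj
      rw [ih, sh_sh, sh_sh]
      congr 1
      have hj' : j • (x + c) = j • x + j • c := nsmul_add x c j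
      have hsum : (k - j) • c + j • c = k • c := by
        rw [← add_nsmul]
        congr 1
        omega
      calc (k - j) • c + j • (x + c) = (k-j) • c + (j • x + j • c) := by rw [hj']
        _ = j • x + ((k-j) • c + j • c) := by abel
        _ = j • x + k • c := by rw [hsum]

/-- permutation invariance -/
lemma HL_perm {xs ys : List A} (h : xs.Perm ys) : ∀ r, HL r xs = HL r ys := by
  induction h with
  | nil => intro r; rfl
  | cons x h ih =>
      intro r
      rw [HL_cons, HL_cons]
      exact Finset.sum_congr rfl fun j _ => by rw [ih]
  | swap x y l =>
      intro r
      rw [HL_cons, HL_cons]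
      have e : ∀ (a b : A), ∀ j ∈ Finset.range (r+1),
          sh (j • a) (HL (r-j) (b :: l))
            = ∑ i ∈ Finset.range (r+1-j), sh (j • a + i • b) (HL (r-j-i) l) := by
        intro a b j hj
        rw [Finset.mem_range] at hj
        rw [HL_cons, sh_sum]
        have hrange : r - j + 1 = r + 1 - j := by omega
        rw [hrange]
        exact Finset.sum_congr rfl fun i _ => by rw [sh_sh, add_comm (i • b)]
      rw [Finset.sum_congr rfl (e y x), Finset.sum_congr rfl (e x y)]
      rw [SIG2 r (fun j i => sh (j • y + i • x) (HL (r-j-i) l))]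
      apply Finset.sum_congr rfl
      intro j hj
      apply Finset.sum_congr rfl
      intro i hi
      rw [add_comm (i • y)]
      have hq : r - i - j = r - j - i := by omega
      rw [hq]
  | trans h1 h2 ih1 ih2 => intro r; rw [ih1, ih2]

end HLsec

section Jsec
variable {A : Type*} [AddCommGroup A]

lemma sh_comm (a b : A) (s : Multiset A) : sh a (sh b s) = sh b (sh a s) := by
  rw [sh_sh, sh_sh, add_comm]

/-- the telescoping identity: ∑ over pivots of shifted products of prefix/suffix
complete-homogeneous multisets -/
lemma Jlem (m : ℕ) : ∀ (k : ℕ) (u : List A),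
    ∑ q ∈ Finset.range u.length,
        sh (u.getD q 0) (cv (HL k (u.take (q+1))) (HL m (u.drop q)))
      = HL (k+m+1) u := by
  intro k u
  induction u generalizing k with
  | nil => simp
  | cons z t ih =>
      rw [show (z :: t).length = t.length + 1 from rfl]
      rw [Finset.sum_range_succ' (fun q => sh ((z :: t).getD q 0)
        (cv (HL k ((z :: t).take (q+1))) (HL m ((z :: t).drop q)))) t.length]
      -- the q = 0 term
      have h0 : sh ((z :: t).getD 0 0) (cv (HL k ((z :: t).take 1)) (HL m ((z :: t).drop 0)))
          = ∑ c ∈ Finset.range (m+1), sh ((k+1+c) • z) (HL (m-c) t) := by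
        show sh z (cv (HL k [z]) (HL m (z :: t))) = _
        rw [HL_singleton, cv_singleton, sh_sh, HL_cons, sh_sum]
        apply Finset.sum_congr rfl
        intro c _
        rw [sh_sh]
        congr 1
        rw [show k+1+c = (k+1)+c from rfl, add_nsmul, succ_nsmul]
        abel
      rw [h0]
      -- the q = i+1 terms
      have h1 : ∀ i ∈ Finset.range t.length,
          sh ((z :: t).getD (i+1) 0)
              (cv (HL k ((z :: t).take (i+1+1))) (HL m ((z :: t).drop (i+1))))
            = ∑ c ∈ Finset.range (k+1), sh (c • z)
                (sh (t.getD i 0) (cv (HL (k-c) (t.take (i+1))) (HL m (t.drop i)))) := by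
        intro i _
        rw [List.getD_cons_succ, List.take_succ_cons, List.drop_succ_cons, HL_cons,
          cv_sum, sh_sum]
        apply Finset.sum_congr rfl
        intro c _
        rw [cv_sh, sh_comm]
      rw [Finset.sum_congr rfl h1, Finset.sum_comm]
      have h2 : ∀ c ∈ Finset.range (k+1),
          ∑ i ∈ Finset.range t.length, sh (c • z)
              (sh (t.getD i 0) (cv (HL (k-c) (t.take (i+1))) (HL m (t.drop i))))
            = sh (c • z) (HL (k-c+m+1) t) := by
        intro c _
        rw [← sh_sum, ih (k-c)]
      rw [Finset.sum_congr rfl h2]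
      -- now assemble the RHS
      rw [HL_cons]
      have hsplit : ∑ j ∈ Finset.range (k+m+1+1), sh (j • z) (HL (k+m+1-j) t)
          = ∑ j ∈ Finset.range (k+1), sh (j • z) (HL (k+m+1-j) t)
            + ∑ c ∈ Finset.range (m+1), sh ((k+1+c) • z) (HL (k+m+1-(k+1+c)) t) := by
        rw [Finset.range_eq_Ico,
          ← Finset.sum_Ico_consecutive (fun j => sh (j • z) (HL (k+m+1-j) t))
            (Nat.zero_le (k+1)) (by omega : k+1 ≤ k+m+1+1), ← Finset.range_eq_Ico]
        congr 1
        rw [Finset.sum_Ico_eq_sum_range]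
        apply Finset.sum_congr
        · congr 1; omega
        · intro c _; rfl
      rw [hsplit]
      congr 1
      · apply Finset.sum_congr rfl
        intro j hj
        rw [Finset.mem_range] at hj
        congr 2
        omega
      · apply Finset.sum_congr rfl
        intro c hc
        congr 2
        omega

end Jsec

section Gsec
variable {A : Type*} [AddCommGroup A]

/-- the pure α,β gadget (sum over ballot words of scan products, in disguise) -/
def Gm (α β : A) : ℕ → ℕ → Multiset A
  | 0, 0 => {0}
  | 0, _+1 => 0
  | _+1, 0 => 0
  | l+1, t+1 => ∑ k ∈ Finset.range (t+1),
      sh (k • α + (t-k) • β) (∑ j ∈ Finset.range (l+1), Gm α β l (t+j))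

/-- partial tail-sums of `Gm` -/
def SGm (α β : A) (l t : ℕ) : Multiset A := ∑ j ∈ Finset.range (l+1), Gm α β l (t+j)

@[simp] lemma Gm_zero_zero (α β : A) : Gm α β 0 0 = {0} := by rw [Gm]
@[simp] lemma Gm_zero_succ (α β : A) (r : ℕ) : Gm α β 0 (r+1) = 0 := by rw [Gm]
@[simp] lemma Gm_succ_zero (α β : A) (l : ℕ) : Gm α β (l+1) 0 = 0 := by rw [Gm]
lemma Gm_succ_succ (α β : A) (l t : ℕ) :
    Gm α β (l+1) (t+1) = ∑ k ∈ Finset.range (t+1), sh (k • α + (t-k) • β) (SGm α β l t) := by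
  rw [Gm]; rfl

lemma Gm_vanish (α β : A) : ∀ l r, l < r → Gm α β l r = 0 := by
  intro l
  induction l with
  | zero =>
      intro r hr
      cases r with
      | zero => omega
      | succ r => simp
  | succ l ih =>
      intro r hr
      cases r with
      | zero => omega
      | succ t =>
          rw [Gm_succ_succ]
          have hz : SGm α β l t = 0 := by
            refine Finset.sum_eq_zero fun j _ => ih (t+j) (by omega)
          rw [hz]
          simp

lemma SGm_vanish (α β : A) {l t : ℕ} (h : l < t) : SGm α β l t = 0 :=
  Finset.sum_eq_zero fun j _ => Gm_vanish α β l (t+j) (by omega)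

lemma Gm_symm (α β : A) : ∀ l r, Gm α β l r = Gm β α l r := by
  intro l
  induction l with
  | zero => intro r; cases r <;> simp
  | succ l ih =>
      intro r
      cases r with
      | zero => simp
      | succ t =>
          rw [Gm_succ_succ, Gm_succ_succ]
          have hSG : SGm α β l t = SGm β α l t :=
            Finset.sum_congr rfl fun j _ => ih (t+j)
          rw [hSG, ← Finset.sum_range_reflect]
          apply Finset.sum_congr rfl
          intro k hk
          rw [Finset.mem_range] at hk
          congr 1
          have h1 : t + 1 - 1 - k = t - k := by omega
          have h2 : t - (t - k) = k := by omega
          rw [h1, h2, add_comm]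

end Gsec

section FseqSec
variable {A : Type*} [AddCommGroup A]

/-- the level-multiset recursion, at the sequence level -/
def Fseq (α β : A) : ℕ → List A → Multiset A
  | 0, u => {u.getD 0 0}
  | l+1, u => ∑ q ∈ Finset.range u.length, Fseq α β l (Rmap α β (q+1) u)

/-- the closed form -/
def Phi (α β : A) (l : ℕ) (u : List A) : Multiset A :=
  ∑ r ∈ Finset.range (l+1), sh (u.getD 0 0 - r • u.getD 0 0) (cv (HL r u) (Gm α β l r))

/-- the elementary summand appearing in the main computation -/
def Y2 (α β : A) (u : List A) (q k m : ℕ) (g : Multiset A) : Multiset A :=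
  sh (u.getD q 0 + (k • α + m • β - (k+m) • u.getD 0 0))
    (cv (cv (HL k (u.take (q+1))) (HL m (u.drop q))) g)

lemma Y2_zero (α β : A) (u : List A) (q k m : ℕ) : Y2 α β u q k m 0 = 0 := by
  simp [Y2]

lemma Y2_sum (α β : A) (u : List A) (q k m : ℕ) {ι : Type*} (S : Finset ι)
    (g : ι → Multiset A) :
    Y2 α β u q k m (∑ i ∈ S, g i) = ∑ i ∈ S, Y2 α β u q k m (g i) := by
  simp only [Y2, cv_sum_right, sh_sum]

theorem Fseq_eq_Phi (α β : A) : ∀ (l : ℕ) (u : List A), Fseq α β l u = Phi α β l u := by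
  intro l
  induction l with
  | zero =>
      intro u
      show {u.getD 0 0} = _
      unfold Phi
      rw [Finset.sum_range_one]
      simp [cv_singleton]
  | succ l ih =>
      intro u
      show (∑ q ∈ Finset.range u.length, Fseq α β l (Rmap α β (q+1) u)) = _
      -- Step 1: each child's value in cube form
      have child : ∀ q ∈ Finset.range u.length,
          Fseq α β l (Rmap α β (q+1) u)
            = ∑ k ∈ Finset.range (l+1), ∑ m ∈ Finset.range (l+1),
                Y2 α β u q k m (SGm α β l (k+m)) := by
        intro q _
        rw [ih]
        unfold Phi
        have hRm : Rmap α β (q+1) u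
            = (u.getD q 0) :: (((u.take (q+1)).map (· + (u.getD q 0 - u.getD 0 0 + α)))
                ++ ((u.drop q).map (· + (u.getD q 0 - u.getD 0 0 + β)))) := rfl
        have hhead : (Rmap α β (q+1) u).getD 0 0 = u.getD q 0 := by rw [hRm]; rfl
        rw [hhead]
        -- expand HL r (Rmap ...) and fold in the outer shift
        have hterm : ∀ r ∈ Finset.range (l+1),
            sh (u.getD q 0 - r • u.getD q 0)
                (cv (HL r (Rmap α β (q+1) u)) (Gm α β l r))
              = ∑ j ∈ Finset.range (r+1), ∑ k ∈ Finset.range (r+1-j),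
                  Y2 α β u q k (r-j-k) (Gm α β l r) := by
          intro r hr
          have hHL : HL r (Rmap α β (q+1) u)
              = ∑ j ∈ Finset.range (r+1), ∑ k ∈ Finset.range (r+1-j),
                  sh ((r-j-k) • (u.getD q 0 - u.getD 0 0 + β)
                      + (k • (u.getD q 0 - u.getD 0 0 + α) + j • u.getD q 0))
                    (cv (HL k (u.take (q+1))) (HL (r-j-k) (u.drop q))) := by
            rw [hRm, HL_cons]
            apply Finset.sum_congr rfl
            intro j hj
            rw [Finset.mem_range] at hj
            rw [HL_append, sh_sum]
            have hrange : r - j + 1 = r + 1 - j := by omega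
            rw [hrange]
            apply Finset.sum_congr rfl
            intro k _
            rw [HL_map_add, HL_map_add, cv_sh, cv_sh_right, sh_sh, sh_sh]
          rw [hHL, cv_sum, sh_sum]
          apply Finset.sum_congr rfl
          intro j hj
          rw [cv_sum, sh_sum]
          apply Finset.sum_congr rfl
          intro k hk
          rw [Finset.mem_range] at hj hk
          rw [cv_sh, sh_sh]
          unfold Y2
          congr 1
          -- the exponent computation
          obtain ⟨m, hm⟩ : ∃ m, r = j + k + m := ⟨r - j - k, by omega⟩
          rw [hm]
          have hmm : j + k + m - j - k = m := by omega
          rw [hmm]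
          simp only [nsmul_add, nsmul_sub, add_nsmul, succ_nsmul]
          abel
        rw [Finset.sum_congr rfl hterm]
        -- reindex (j,k) ↦ (k,m)
        have hreind : ∀ r ∈ Finset.range (l+1),
            (∑ j ∈ Finset.range (r+1), ∑ k ∈ Finset.range (r+1-j),
                Y2 α β u q k (r-j-k) (Gm α β l r))
              = ∑ k ∈ Finset.range (r+1), ∑ m ∈ Finset.range (r+1-k),
                  Y2 α β u q k m (Gm α β l r) := by
          intro r _
          rw [SIG2 r (fun j k => Y2 α β u q k (r-j-k) (Gm α β l r))]
          apply Finset.sum_congr rfl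
          intro k hk
          rw [Finset.mem_range] at hk
          rw [← Finset.sum_range_reflect (fun m => Y2 α β u q k m (Gm α β l r)) (r+1-k)]
          apply Finset.sum_congr rfl
          intro j hj
          rw [Finset.mem_range] at hj
          congr 1
          omega
        rw [Finset.sum_congr rfl hreind]
        -- pad to the cube
        have hpad : ∀ r ∈ Finset.range (l+1),
            (∑ k ∈ Finset.range (r+1), ∑ m ∈ Finset.range (r+1-k),
                Y2 α β u q k m (Gm α β l r))
              = ∑ k ∈ Finset.range (l+1), ∑ m ∈ Finset.range (l+1),
                  (if k+m ≤ r then Y2 α β u q k m (Gm α β l r) else 0) := by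
          intro r hr
          rw [Finset.mem_range] at hr
          rw [PAD1 (by omega : r ≤ l)]
          apply Finset.sum_congr rfl
          intro k _
          by_cases hkr : k ≤ r
          · rw [if_pos hkr]
            have h1 : r + 1 - k = (r - k) + 1 := by omega
            rw [h1, PAD1 (by omega : r - k ≤ l)]
            apply Finset.sum_congr rfl
            intro m _
            have : (m ≤ r - k) ↔ (k + m ≤ r) := by omega
            rw [if_congr this rfl rfl]
          · rw [if_neg hkr]
            symm
            apply Finset.sum_eq_zero
            intro m _
            rw [if_neg (by omega)]
        rw [Finset.sum_congr rfl hpad]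
        -- swap r to the inside and collapse to SGm
        rw [Finset.sum_comm]
        apply Finset.sum_congr rfl
        intro k _
        rw [Finset.sum_comm]
        apply Finset.sum_congr rfl
        intro m _
        have hite : ∀ r ∈ Finset.range (l+1),
            (if k+m ≤ r then Y2 α β u q k m (Gm α β l r) else 0)
              = Y2 α β u q k m (if k+m ≤ r then Gm α β l r else 0) := by
          intro r _
          by_cases hc : k+m ≤ r
          · rw [if_pos hc, if_pos hc]
          · rw [if_neg hc, if_neg hc, Y2_zero]
        rw [Finset.sum_congr rfl hite, ← Y2_sum,
          sum_ite_ge (Gm α β l) (Gm_vanish α β l) (k+m)]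
        rfl
      rw [Finset.sum_congr rfl child]
      -- Step 2: swap q to the inside and apply the telescoping identity
      rw [Finset.sum_comm]
      have step3 : ∀ k ∈ Finset.range (l+1),
          (∑ m ∈ Finset.range (l+1), ∑ q ∈ Finset.range u.length,
              Y2 α β u q k m (SGm α β l (k+m)))
            = ∑ m ∈ Finset.range (l+1),
                sh (k • α + m • β - (k+m) • u.getD 0 0)
                  (cv (HL (k+m+1) u) (SGm α β l (k+m))) := by
        intro k _
        apply Finset.sum_congr rfl
        intro m _
        have hy : ∀ q ∈ Finset.range u.length,
            Y2 α β u q k m (SGm α β l (k+m))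
              = sh (k • α + m • β - (k+m) • u.getD 0 0)
                  (cv (sh (u.getD q 0) (cv (HL k (u.take (q+1))) (HL m (u.drop q))))
                    (SGm α β l (k+m))) := by
          intro q _
          unfold Y2
          rw [cv_sh, sh_sh]
        rw [Finset.sum_congr rfl hy, ← sh_sum, ← cv_sum, Jlem]
      rw [Finset.sum_congr rfl (by
        intro k hk
        rw [Finset.sum_comm]
        : ∀ k ∈ Finset.range (l+1),
            (∑ q ∈ Finset.range u.length, ∑ m ∈ Finset.range (l+1),
                Y2 α β u q k m (SGm α β l (k+m)))
          = ∑ m ∈ Finset.range (l+1), ∑ q ∈ Finset.range u.length,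
                Y2 α β u q k m (SGm α β l (k+m)))]
      rw [Finset.sum_congr rfl step3]
      -- Step 4: identify with Phi (l+1) u
      unfold Phi
      rw [Finset.sum_range_succ'
        (fun r => sh (u.getD 0 0 - r • u.getD 0 0) (cv (HL r u) (Gm α β (l+1) r))) (l+1)]
      simp only [Gm_succ_zero, cv_zero_right, sh_zero, add_zero]
      have hexp : ∀ t ∈ Finset.range (l+1),
          sh (u.getD 0 0 - (t+1) • u.getD 0 0) (cv (HL (t+1) u) (Gm α β (l+1) (t+1)))
            = ∑ k ∈ Finset.range (t+1),
                sh (k • α + (t-k) • β - t • u.getD 0 0)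
                  (cv (HL (t+1) u) (SGm α β l t)) := by
        intro t _
        rw [Gm_succ_succ, cv_sum_right, sh_sum]
        apply Finset.sum_congr rfl
        intro k _
        rw [cv_sh_right, sh_sh]
        congr 1
        simp only [add_nsmul, one_nsmul]
        abel
      rw [Finset.sum_congr rfl hexp]
      -- Step 5: unpad the LHS cube and reindex by t = k+m
      have hunpad : ∀ k ∈ Finset.range (l+1),
          (∑ m ∈ Finset.range (l+1),
              sh (k • α + m • β - (k+m) • u.getD 0 0)
                (cv (HL (k+m+1) u) (SGm α β l (k+m))))
            = ∑ m ∈ Finset.range (l+1-k),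
                sh (k • α + m • β - (k+m) • u.getD 0 0)
                  (cv (HL (k+m+1) u) (SGm α β l (k+m))) := by
        intro k hk
        rw [Finset.mem_range] at hk
        have h1 : l + 1 - k = (l - k) + 1 := by omega
        rw [h1, PAD1 (by omega : l - k ≤ l)]
        apply Finset.sum_congr rfl
        intro m _
        by_cases hc : m ≤ l - k
        · rw [if_pos hc]
        · rw [if_neg hc, SGm_vanish α β (by omega : l < k+m), cv_zero_right, sh_zero]
      rw [Finset.sum_congr rfl hunpad]
      rw [← SIG l (fun k m => sh (k • α + m • β - (k+m) • u.getD 0 0)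
        (cv (HL (k+m+1) u) (SGm α β l (k+m))))]
      apply Finset.sum_congr rfl
      intro t ht
      apply Finset.sum_congr rfl
      intro k hk
      rw [Finset.mem_range] at ht hk
      have h1 : k + (t - k) = t := by omega
      rw [h1]


end FseqSec

section BridgeSec

open Finset

/-- all endpoints positive -/
def Pos (s : Finset (ℕ × ℕ)) : Prop := ∀ e ∈ s, 1 ≤ e.1 ∧ 1 ≤ e.2

/-- the edge relabeling map -/
def emap (x : ℕ) : ℕ × ℕ → ℕ × ℕ := fun e => (shiftV x e.1, shiftV x e.2)

/-- # of old edges crossed by the new first edge `{1,y}` -/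
def Cx (y : ℕ) (s : Finset (ℕ × ℕ)) : ℕ := (s.filter fun e => e.1+2 ≤ y ∧ y ≤ e.2+1).card

/-- # of old edges nested inside the new first edge `{1,y}` -/
def Nx (y : ℕ) (s : Finset (ℕ × ℕ)) : ℕ := (s.filter fun e => e.2+2 ≤ y).card

lemma shiftV_lt_iff (x a b : ℕ) : shiftV x a < shiftV x b ↔ a < b := by
  unfold shiftV; split <;> split <;> omega

lemma shiftV_inj (x : ℕ) : Function.Injective (shiftV x) := by
  intro a b h
  by_contra hne
  rcases Nat.lt_or_ge a b with hlt | hge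
  · have := (shiftV_lt_iff x a b).mpr hlt; omega
  · have hlt : b < a := by omega
    have := (shiftV_lt_iff x b a).mpr hlt; omega

lemma shiftV_pos (x v : ℕ) : 1 ≤ shiftV x v := by unfold shiftV; split <;> omega

lemma shiftV_ge2 (x : ℕ) {v : ℕ} (h : 1 ≤ v) : 2 ≤ shiftV x v := by
  unfold shiftV; split <;> omega

lemma emap_inj (x : ℕ) : Function.Injective (emap x) := by
  intro a b h
  have h1 := congrArg Prod.fst h
  have h2 := congrArg Prod.snd h
  simp only [emap] at h1 h2
  exact Prod.ext (shiftV_inj x h1) (shiftV_inj x h2)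

lemma addFirst_eq (x : ℕ) (s : Finset (ℕ × ℕ)) :
    addFirst x s = insert (1, x) (s.image (emap x)) := rfl

lemma one_x_notmem {s : Finset (ℕ × ℕ)} (hP : Pos s) (x y : ℕ) :
    (1, y) ∉ s.image (emap x) := by
  intro hmem
  rw [Finset.mem_image] at hmem
  obtain ⟨e, he, heq⟩ := hmem
  have h1 : shiftV x e.1 = 1 := congrArg Prod.fst heq
  have := shiftV_ge2 x (hP e he).1
  omega

lemma addFirst_card {s : Finset (ℕ × ℕ)} (hP : Pos s) (x : ℕ) :
    (addFirst x s).card = s.card + 1 := by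
  rw [addFirst_eq, Finset.card_insert_of_notMem (one_x_notmem hP x x),
    Finset.card_image_of_injective s (emap_inj x)]

lemma Pos_addFirst {s : Finset (ℕ × ℕ)} (hP : Pos s) {x : ℕ} (hx : 2 ≤ x) :
    Pos (addFirst x s) := by
  intro e he
  rw [addFirst_eq, Finset.mem_insert] at he
  rcases he with he | he
  · subst he; exact ⟨le_refl 1, by omega⟩
  · rw [Finset.mem_image] at he
    obtain ⟨f, hf, heq⟩ := he
    subst heq
    exact ⟨shiftV_pos x f.1, shiftV_pos x f.2⟩

lemma card_filter_product {γ δ : Type*} [DecidableEq γ] [DecidableEq δ]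
    (s : Finset γ) (t : Finset δ) (P : γ × δ → Prop) [DecidablePred P] :
    ((s ×ˢ t).filter P).card = ∑ a ∈ s, (t.filter fun b => P (a, b)).card := by
  have h1 : (((s ×ˢ t).filter P).card : ℕ) = ∑ p ∈ s ×ˢ t, if P p then 1 else 0 :=
    Finset.natCast_card_filter P (s ×ˢ t)
  rw [h1, Finset.sum_product]
  apply Finset.sum_congr rfl
  intro a _
  exact (Finset.natCast_card_filter _ t).symm

/-- generic: the pair-statistic of `addFirst` -/
lemma pairStat_addFirst (P : ℕ × ℕ → ℕ × ℕ → Prop) [∀ E f, Decidable (P E f)]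
    {s : Finset (ℕ × ℕ)} (hP : Pos s) (x : ℕ)
    (hnew : ¬ P (1, x) (1, x))
    (hleft : ∀ e ∈ s, ¬ P (emap x e) (1, x))
    (hpres : ∀ e ∈ s, ∀ f ∈ s, (P (emap x e) (emap x f) ↔ P e f)) :
    (((addFirst x s) ×ˢ (addFirst x s)).filter fun p => P p.1 p.2).card
      = (s.filter fun e => P (1, x) (emap x e)).card
        + ((s ×ˢ s).filter fun p => P p.1 p.2).card := by
  have hnot := one_x_notmem hP x x
  rw [addFirst_eq, card_filter_product, Finset.sum_insert hnot]
  congr 1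
  · -- count of pairs with first component the new edge
    rw [Finset.filter_insert, if_neg hnew, Finset.filter_image,
      Finset.card_image_of_injective _ (emap_inj x)]
  · -- pairs with first component an old edge
    rw [Finset.sum_image (fun a _ b _ h => emap_inj x h), card_filter_product]
    apply Finset.sum_congr rfl
    intro e he
    rw [Finset.filter_insert, if_neg (hleft e he), Finset.filter_image,
      Finset.card_image_of_injective _ (emap_inj x)]
    congr 1
    exact Finset.filter_congr fun f hf => by
      simp only [hpres e he f hf]

lemma crStat_addFirst {s : Finset (ℕ × ℕ)} (hP : Pos s) (x : ℕ) :
    crStat (addFirst x s) = crStat s + Cx x s := by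
  have h := pairStat_addFirst (fun E f => E.1 < f.1 ∧ f.1 < E.2 ∧ E.2 < f.2) hP x
    (by simp)
    (fun e he => by
      have := shiftV_pos x e.1
      simp only [emap, not_and]
      intro hc; omega)
    (fun e he f hf => by
      simp only [emap, shiftV_lt_iff])
  have hA : (s.filter fun e =>
      (fun (E f : ℕ×ℕ) => E.1 < f.1 ∧ f.1 < E.2 ∧ E.2 < f.2) (1,x) (emap x e)).card
      = Cx x s := ?_
  · calc crStat (addFirst x s)
        = _ := h
      _ = crStat s + Cx x s := by rw [hA]; exact add_comm _ _
  unfold Cx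
  congr 1
  apply Finset.filter_congr
  intro e he
  have he1 := (hP e he).1
  simp only [emap]
  unfold shiftV
  constructor
  · intro ⟨h1, h2, h3⟩
    constructor
    · split at h2 <;> omega
    · split at h3 <;> omega
  · intro ⟨h1, h2⟩
    refine ⟨?_, ?_, ?_⟩
    · split <;> omega
    · split <;> omega
    · split <;> omega

lemma neStat_addFirst {s : Finset (ℕ × ℕ)} (hP : Pos s) (x : ℕ) :
    neStat (addFirst x s) = neStat s + Nx x s := by
  have h := pairStat_addFirst (fun E f => E.1 < f.1 ∧ f.2 < E.2) hP x
    (by simp)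
    (fun e he => by
      have := shiftV_pos x e.1
      simp only [emap, not_and]
      intro hc; omega)
    (fun e he f hf => by
      simp only [emap, shiftV_lt_iff])
  have hA : (s.filter fun e =>
      (fun (E f : ℕ×ℕ) => E.1 < f.1 ∧ f.2 < E.2) (1,x) (emap x e)).card
      = Nx x s := ?_
  · calc neStat (addFirst x s)
        = _ := h
      _ = neStat s + Nx x s := by rw [hA]; exact add_comm _ _
  unfold Nx
  congr 1
  apply Finset.filter_congr
  intro e he
  have he1 := (hP e he).1
  simp only [emap]
  unfold shiftV
  constructor
  · intro ⟨h1, h2⟩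
    split at h2 <;> omega
  · intro h1
    constructor
    · split <;> omega
    · split <;> omega

/-- the count identities, prefix region -/
lemma Cx_addFirst_pref {s : Finset (ℕ × ℕ)} (hP : Pos s) {x p : ℕ}
    (hp : 1 ≤ p) (hpx : p + 1 ≤ x) :
    Cx (p+2) (addFirst x s) = Cx (p+1) s + 1 := by
  unfold Cx
  rw [addFirst_eq, Finset.filter_insert, if_pos (by omega : (1:ℕ)+2 ≤ p+2 ∧ p+2 ≤ x+1)]
  rw [Finset.card_insert_of_notMem (fun hmem =>
    one_x_notmem hP x x (Finset.mem_of_mem_filter _ hmem))]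
  congr 1
  rw [Finset.filter_image, Finset.card_image_of_injective _ (emap_inj x)]
  congr 1
  apply Finset.filter_congr
  intro e he
  simp only [emap]
  unfold shiftV
  constructor
  · intro ⟨h1, h2⟩
    constructor
    · split at h1 <;> omega
    · split at h2 <;> omega
  · intro ⟨h1, h2⟩
    constructor
    · split <;> omega
    · split <;> omega

lemma Nx_addFirst_pref {s : Finset (ℕ × ℕ)} (hP : Pos s) {x p : ℕ}
    (hp : 1 ≤ p) (hpx : p + 1 ≤ x) :
    Nx (p+2) (addFirst x s) = Nx (p+1) s := by
  unfold Nx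
  rw [addFirst_eq, Finset.filter_insert, if_neg (by omega : ¬ (x+2 ≤ p+2))]
  rw [Finset.filter_image, Finset.card_image_of_injective _ (emap_inj x)]
  congr 1
  apply Finset.filter_congr
  intro e he
  simp only [emap]
  unfold shiftV
  constructor
  · intro h1; split at h1 <;> omega
  · intro h1; split <;> omega

lemma Cx_addFirst_suff {s : Finset (ℕ × ℕ)} (hP : Pos s) {x p : ℕ}
    (hx : 2 ≤ x) (hxp : x ≤ p) :
    Cx (p+2) (addFirst x s) = Cx p s := by
  unfold Cx
  rw [addFirst_eq, Finset.filter_insert, if_neg (by omega : ¬ ((1:ℕ)+2 ≤ p+2 ∧ p+2 ≤ x+1))]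
  rw [Finset.filter_image, Finset.card_image_of_injective _ (emap_inj x)]
  congr 1
  apply Finset.filter_congr
  intro e he
  simp only [emap]
  unfold shiftV
  constructor
  · intro ⟨h1, h2⟩
    constructor
    · split at h1 <;> omega
    · split at h2 <;> omega
  · intro ⟨h1, h2⟩
    constructor
    · split <;> omega
    · split <;> omega

lemma Nx_addFirst_suff {s : Finset (ℕ × ℕ)} (hP : Pos s) {x p : ℕ}
    (hx : 2 ≤ x) (hxp : x ≤ p) :
    Nx (p+2) (addFirst x s) = Nx p s + 1 := by
  unfold Nx
  rw [addFirst_eq, Finset.filter_insert, if_pos (by omega : x+2 ≤ p+2)]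
  rw [Finset.card_insert_of_notMem (fun hmem =>
    one_x_notmem hP x x (Finset.mem_of_mem_filter _ hmem))]
  congr 1
  rw [Finset.filter_image, Finset.card_image_of_injective _ (emap_inj x)]
  congr 1
  apply Finset.filter_congr
  intro e he
  simp only [emap]
  unfold shiftV
  constructor
  · intro h1; split at h1 <;> omega
  · intro h1; split <;> omega

lemma Cx_two {s : Finset (ℕ × ℕ)} (hP : Pos s) : Cx 2 s = 0 := by
  unfold Cx
  rw [Finset.card_eq_zero, Finset.filter_eq_empty_iff]
  intro e he
  have := (hP e he).1
  omega

lemma Nx_two {s : Finset (ℕ × ℕ)} (hP : Pos s) : Nx 2 s = 0 := by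
  unfold Nx
  rw [Finset.card_eq_zero, Finset.filter_eq_empty_iff]
  intro e he
  have := (hP e he).2
  omega

end BridgeSec

section SeqSpecSec
variable {A : Type*} [AddCommGroup A]

lemma seq_spec {α β : A} {s : Finset (ℕ × ℕ)} {u : List A} (hs : IsSeq α β s u) :
    Pos s ∧ u.length = 2 * s.card + 1 ∧
      ∀ p, p < u.length →
        u.getD p 0 = (crStat s • α + neStat s • β)
          + ((Cx (p+2) s) • α + (Nx (p+2) s) • β) := by
  induction hs with
  | empty =>
      refine ⟨by intro e he; simp at he, by simp, ?_⟩
      intro p hp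
      have hp0 : p = 0 := by
        simp only [List.length_cons, List.length_nil] at hp
        omega
      subst hp0
      have h1 : crStat (∅ : Finset (ℕ × ℕ)) = 0 := by
        unfold crStat; simp
      have h2 : neStat (∅ : Finset (ℕ × ℕ)) = 0 := by
        unfold neStat; simp
      have h3 : Cx 2 (∅ : Finset (ℕ × ℕ)) = 0 := by unfold Cx; simp
      have h4 : Nx 2 (∅ : Finset (ℕ × ℕ)) = 0 := by unfold Nx; simp
      simp [h1, h2, h3, h4]
  | step s u x hu h2 hx ih =>
      obtain ⟨hP, hlen, hval⟩ := ih
      have hPos' : Pos (addFirst x s) := Pos_addFirst hP h2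
      have hcard' : (addFirst x s).card = s.card + 1 := addFirst_card hP x
      have hx2 : x - 1 - 1 = x - 2 := by omega
      have hRm : Rmap α β (x-1) u
          = u.getD (x-2) 0 :: ((u.take (x-1)).map (· + (u.getD (x-2) 0 - u.getD 0 0 + α))
              ++ (u.drop (x-2)).map (· + (u.getD (x-2) 0 - u.getD 0 0 + β))) := by
        unfold Rmap
        rw [hx2]
      have hlen' : (Rmap α β (x-1) u).length = 2 * (addFirst x s).card + 1 := by
        rw [hRm, hcard']
        simp only [List.length_cons, List.length_append, List.length_map,
          List.length_take, List.length_drop]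
        omega
      have hhead : u.getD 0 0 = crStat s • α + neStat s • β := by
        have := hval 0 (by omega)
        rw [Cx_two hP, Nx_two hP] at this
        simpa using this
      have hpiv : u.getD (x-2) 0 = (crStat s • α + neStat s • β)
          + ((Cx x s) • α + (Nx x s) • β) := by
        have hlt : x - 2 < u.length := by omega
        have := hval (x-2) hlt
        rw [show x - 2 + 2 = x by omega] at this
        exact this
      refine ⟨hPos', hlen', ?_⟩
      intro p hp
      rw [hlen', hcard'] at hp
      rcases Nat.eq_zero_or_pos p with hp0 | hppos
      · -- p = 0 : the head
        subst hp0
        rw [hRm]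
        show u.getD (x-2) 0 = _
        rw [hpiv, crStat_addFirst hP, neStat_addFirst hP, Cx_two hPos', Nx_two hPos']
        simp only [add_nsmul, zero_nsmul]
        abel
      rcases Nat.lt_or_ge (p-1) (x-1) with hpre | hsuf
      · -- prefix region : 1 ≤ p ≤ x-1
        obtain ⟨q, rfl⟩ : ∃ q, p = q + 1 := ⟨p-1, by omega⟩
        have hq : q < x - 1 := by omega
        have hqlen : q < u.length := by omega
        have htklen : q < ((u.take (x-1)).map
            (· + (u.getD (x-2) 0 - u.getD 0 0 + α))).length := by
          simp only [List.length_map, List.length_take]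
          omega
        rw [hRm]
        show ((u.take (x-1)).map (· + (u.getD (x-2) 0 - u.getD 0 0 + α))
              ++ (u.drop (x-2)).map (· + (u.getD (x-2) 0 - u.getD 0 0 + β))).getD q 0 = _
        rw [List.getD_append _ _ _ _ htklen,
          List.getD_eq_getElem _ _ htklen, List.getElem_map, List.getElem_take,
          ← List.getD_eq_getElem u 0 (by omega : q < u.length)]
        rw [hval q hqlen, hpiv, hhead]
        have hCx : Cx (q+1+2) (addFirst x s) = Cx (q+2) s + 1 := by
          have := Cx_addFirst_pref hP (by omega : 1 ≤ q+1) (by omega : (q+1)+1 ≤ x)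
          convert this using 2
        have hNx : Nx (q+1+2) (addFirst x s) = Nx (q+2) s := by
          have := Nx_addFirst_pref hP (by omega : 1 ≤ q+1) (by omega : (q+1)+1 ≤ x)
          convert this using 2
        rw [hCx, hNx, crStat_addFirst hP, neStat_addFirst hP]
        simp only [add_nsmul, one_nsmul]
        abel
      · -- suffix region : x ≤ p
        have hpx : x ≤ p := by omega
        obtain ⟨q, rfl⟩ : ∃ q, p = q + 1 := ⟨p-1, by omega⟩
        have htklen : ((u.take (x-1)).map
            (· + (u.getD (x-2) 0 - u.getD 0 0 + α))).length = x - 1 := by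
          simp only [List.length_map, List.length_take]
          omega
        have hdrlen : q - (x-1) < ((u.drop (x-2)).map
            (· + (u.getD (x-2) 0 - u.getD 0 0 + β))).length := by
          simp only [List.length_map, List.length_drop]
          omega
        rw [hRm]
        show ((u.take (x-1)).map (· + (u.getD (x-2) 0 - u.getD 0 0 + α))
              ++ (u.drop (x-2)).map (· + (u.getD (x-2) 0 - u.getD 0 0 + β))).getD q 0 = _
        rw [List.getD_append_right _ _ _ _ (by rw [htklen]; omega : ((u.take (x-1)).map
            (· + (u.getD (x-2) 0 - u.getD 0 0 + α))).length ≤ q)]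
        rw [htklen, List.getD_eq_getElem _ _ hdrlen, List.getElem_map, List.getElem_drop,
          ← List.getD_eq_getElem u 0 (by
            simp only [List.length_map, List.length_drop] at hdrlen
            omega :
            x - 2 + (q - (x-1)) < u.length)]
        have hidx : x - 2 + (q - (x-1)) = q + 1 - 2 := by omega
        rw [hidx]
        rw [hval (q+1-2) (by omega), hpiv, hhead]
        have hCx : Cx (q+1+2) (addFirst x s) = Cx (q+1) s := by
          have := Cx_addFirst_suff hP h2 (by omega : x ≤ q+1)
          convert this using 2
        have hNx : Nx (q+1+2) (addFirst x s) = Nx (q+1) s + 1 := by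
          have := Nx_addFirst_suff hP h2 (by omega : x ≤ q+1)
          convert this using 2
        rw [show q+1-2 + 2 = q+1 by omega]
        rw [hCx, hNx, crStat_addFirst hP, neStat_addFirst hP]
        simp only [add_nsmul, one_nsmul]
        abel

end SeqSpecSec

section FinalSec
variable {A : Type*} [AddCommGroup A]

lemma bind_eq_sum {γ : Type*} (S : Finset γ) (f : γ → Multiset A) :
    S.val.bind f = ∑ x ∈ S, f x := by
  rw [Finset.sum, Multiset.bind, Multiset.join]

lemma levelM_succ' : ∀ (l : ℕ) (s : Finset (ℕ × ℕ)),
    levelM s (l+1) = (childrenM s).bind (fun K => levelM K l) := by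
  intro l
  induction l with
  | zero =>
      intro s
      show ({s} : Multiset (Finset (ℕ×ℕ))).bind childrenM = _
      rw [Multiset.singleton_bind]
      have : (childrenM s).bind (fun K => levelM K 0) = (childrenM s).bind (fun K => {K}) := rfl
      rw [this, Multiset.bind_singleton]
      exact (Multiset.map_id' _).symm
  | succ l ih =>
      intro s
      show (levelM s (l+1)).bind childrenM = _
      rw [ih s, Multiset.bind_assoc]
      exact Multiset.bind_congr fun a _ => rfl

lemma sum_getD : ∀ u : List A,
    (∑ q ∈ Finset.range u.length, ({u.getD q 0} : Multiset A)) = (↑u : Multiset A) := by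
  intro u
  induction u with
  | nil => simp
  | cons z t ih =>
      rw [List.length_cons,
        Finset.sum_range_succ' (fun q => ({(z :: t).getD q 0} : Multiset A)) t.length]
      have h1 : ∀ i, (z :: t).getD (i+1) 0 = t.getD i 0 := fun i => rfl
      have h2 : (z :: t).getD 0 0 = z := rfl
      simp only [h1, h2, ih]
      rw [← Multiset.cons_coe z t, ← Multiset.singleton_add]
      exact add_comm _ _

lemma Fseq_one (α β : A) (u : List A) : Fseq α β 1 u = (↑u : Multiset A) := by
  show (∑ q ∈ Finset.range u.length, Fseq α β 0 (Rmap α β (q+1) u)) = _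
  have h : ∀ q, Fseq α β 0 (Rmap α β (q+1) u) = ({u.getD q 0} : Multiset A) := fun q => rfl
  simp only [h]
  exact sum_getD u

lemma Fseq_congr (α β : A) {u v : List A} (hh : u.getD 0 0 = v.getD 0 0)
    (hp : (↑u : Multiset A) = (↑v : Multiset A)) (l : ℕ) :
    Fseq α β l u = Fseq α β l v := by
  rw [Fseq_eq_Phi, Fseq_eq_Phi]
  unfold Phi
  apply Finset.sum_congr rfl
  intro r _
  rw [hh, HL_perm (Multiset.coe_eq_coe.mp hp) r]

lemma Fseq_swap (α β : A) (l : ℕ) (u : List A) : Fseq α β l u = Fseq β α l u := by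
  rw [Fseq_eq_Phi, Fseq_eq_Phi]
  unfold Phi
  apply Finset.sum_congr rfl
  intro r _
  rw [Gm_symm]

lemma seq_head {α β : A} {s : Finset (ℕ × ℕ)} {u : List A} (hs : IsSeq α β s u) :
    u.getD 0 0 = crStat s • α + neStat s • β := by
  obtain ⟨hP, hlen, hval⟩ := seq_spec hs
  have := hval 0 (by omega)
  rw [Cx_two hP, Nx_two hP] at this
  simpa using this

lemma bridge {α β : A} : ∀ (l : ℕ) {s : Finset (ℕ × ℕ)} {u : List A}, IsSeq α β s u →
    (levelM s l).map (fun K => crStat K • α + neStat K • β) = Fseq α β l u := by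
  intro l
  induction l with
  | zero =>
      intro s u hs
      show ({s} : Multiset (Finset (ℕ×ℕ))).map _ = ({u.getD 0 0} : Multiset A)
      rw [Multiset.map_singleton, seq_head hs]
  | succ l ih =>
      intro s u hs
      obtain ⟨hP, hlen, _⟩ := seq_spec hs
      rw [levelM_succ', Multiset.map_bind]
      rw [show childrenM s
        = (Finset.Icc 2 (2 * s.card + 2)).val.map (fun x => addFirst x s) from rfl]
      rw [Multiset.bind_map]
      have hpt : ∀ x ∈ (Finset.Icc 2 (2 * s.card + 2)).val,
          (levelM (addFirst x s) l).map (fun K => crStat K • α + neStat K • β)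
            = Fseq α β l (Rmap α β (x-1) u) := by
        intro x hx
        rw [← Finset.mem_def, Finset.mem_Icc] at hx
        exact ih (IsSeq.step s u x hs hx.1 hx.2)
      rw [Multiset.bind_congr hpt, bind_eq_sum]
      show _ = ∑ q ∈ Finset.range u.length, Fseq α β l (Rmap α β (q+1) u)
      rw [hlen, ← Finset.Ico_add_one_right_eq_Icc, Finset.sum_Ico_eq_sum_range]
      apply Finset.sum_congr
      · congr 1
      · intro q _
        have hq : 2 + q - 1 = q + 1 := by omega
        rw [hq]

end FinalSec

end KlazarAux

open KlazarAux

/-- (1) `s_{α,β}` coincides on `T(M,l)` and `T(N,l)` for all `l ≥ 0` iff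
`s_{α,β}(M) = s_{α,β}(N)` and `seq_{α,β}(M)`, `seq_{α,β}(N)` are equal as multisets of terms;
(2) the multiset of values of `s_{α,β}` on `T(M,l)` equals that of `s_{β,α}` on `T(N,l)` for
all `l ≥ 0` iff `s_{α,β}(M) = s_{β,α}(N)` and `seq_{α,β}(M)`, `seq_{β,α}(N)` are equal as
multisets of terms. -/
theorem levels_coincide_iff_seq_eq {A : Type*} [AddCommGroup A] (α β : A) (n : ℕ)
    (M N : Finset (ℕ × ℕ)) (hM : IsMatching n M) (hN : IsMatching n N)
    (u v w : List A) (hu : IsSeq α β M u) (hv : IsSeq α β N v) (hw : IsSeq β α N w) :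
    ((∀ l : ℕ, (levelM M l).map (fun K => crStat K • α + neStat K • β)
        = (levelM N l).map (fun K => crStat K • α + neStat K • β)) ↔
      (crStat M • α + neStat M • β = crStat N • α + neStat N • β ∧
        (↑u : Multiset A) = (↑v : Multiset A))) ∧
    ((∀ l : ℕ, (levelM M l).map (fun K => crStat K • α + neStat K • β)
        = (levelM N l).map (fun K => crStat K • β + neStat K • α)) ↔
      (crStat M • α + neStat M • β = crStat N • β + neStat N • α ∧
        (↑u : Multiset A) = (↑w : Multiset A))) := by
  constructor
  · constructor
    · intro hl
      constructor
      · have h0 : ({M} : Multiset (Finset (ℕ×ℕ))).map (fun K => crStat K • α + neStat K • β)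
            = ({N} : Multiset (Finset (ℕ×ℕ))).map (fun K => crStat K • α + neStat K • β) :=
          hl 0
        rw [Multiset.map_singleton, Multiset.map_singleton] at h0
        exact Multiset.singleton_inj.mp h0
      · have h1 := hl 1
        rw [bridge 1 hu, bridge 1 hv, Fseq_one, Fseq_one] at h1
        exact h1
    · rintro ⟨hf, huv⟩ l
      rw [bridge l hu, bridge l hv]
      exact Fseq_congr α β (by rw [seq_head hu, seq_head hv]; exact hf) huv l
  · constructor
    · intro hl
      constructor
      · have h0 : ({M} : Multiset (Finset (ℕ×ℕ))).map (fun K => crStat K • α + neStat K • β)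
            = ({N} : Multiset (Finset (ℕ×ℕ))).map (fun K => crStat K • β + neStat K • α) :=
          hl 0
        rw [Multiset.map_singleton, Multiset.map_singleton] at h0
        exact Multiset.singleton_inj.mp h0
      · have h1 := hl 1
        rw [bridge 1 hu, bridge 1 hw, Fseq_one, Fseq_one] at h1
        exact h1
    · rintro ⟨hf, huw⟩ l
      rw [bridge l hu, bridge l hw, Fseq_swap α β l u]
      exact Fseq_congr β α
        (by rw [seq_head hu, seq_head hw]; exact hf) huw l
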